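/- arXiv:1611.05679 — 2 statements merged into one kernel-verified Lean document; each statement's English description precedes it below -/
import Mathlib

section
/- If Q and Q' are key polynomials for ν with ε(Q) < ε(Q'), then ν_Q(Q') < ν(Q'). -/
open Polynomial
open scoped Classical
noncomputable section

/-- `ν` is (the restriction to nonzero polynomials of) a valuation on `K[x]`,
nontrivial on `K`, with `ν(x) ≥ 0`.  Values are taken in a linearly ordered
field `Γ` (playing the role of the divisible hull of the value group). -/
structure IsVal {K : Type*} [Field K] {Γ : Type*} [Field Γ] [LinearOrder Γ] [IsStrictOrderedRing Γ]
    (ν : Polynomial K → Γ) : Prop where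
  map_mul : ∀ f g : Polynomial K, f ≠ 0 → g ≠ 0 → ν (f * g) = ν f + ν g
  map_add : ∀ f g : Polynomial K, f ≠ 0 → g ≠ 0 → f + g ≠ 0 →
    min (ν f) (ν g) ≤ ν (f + g)
  nontrivial : ∃ a : K, a ≠ 0 ∧ ν (C a) ≠ 0
  nonneg_x : 0 ≤ ν X

/-- `ε(f) = max_{b ≥ 1, ∂_b f ≠ 0} (ν(f) - ν(∂_b f))/b`, where `∂_b` is the
`b`-th formal (Hasse) derivative.  (Terms with `∂_b f = 0` correspond to the
value `-∞` and are omitted from the maximum.) -/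
noncomputable def eps {K : Type*} [Field K] {Γ : Type*} [Field Γ] [LinearOrder Γ] [IsStrictOrderedRing Γ]
    (ν : Polynomial K → Γ) (f : Polynomial K) : Γ :=
  if h : ((Finset.Icc 1 f.natDegree).filter
      fun b => Polynomial.hasseDeriv b f ≠ 0).Nonempty then
    ((Finset.Icc 1 f.natDegree).filter
      fun b => Polynomial.hasseDeriv b f ≠ 0).sup' h
      fun b => (ν f - ν (Polynomial.hasseDeriv b f)) / (b : Γ)
  else 0

/-- A monic (nonconstant) polynomial `Q` is a key polynomial for `ν` if every
`f ∈ K[x]` with `ε(f) ≥ ε(Q)` satisfies `deg f ≥ deg Q`. -/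
def IsKeyPol {K : Type*} [Field K] {Γ : Type*} [Field Γ] [LinearOrder Γ] [IsStrictOrderedRing Γ]
    (ν : Polynomial K → Γ) (Q : Polynomial K) : Prop :=
  Q.Monic ∧ 1 ≤ Q.natDegree ∧
    ∀ f : Polynomial K, 1 ≤ f.natDegree → eps ν Q ≤ eps ν f →
      Q.natDegree ≤ f.natDegree

/-- The `i`-th coefficient `f_i` of the `q`-standard expansion
`f = Σ f_i q^i` (each `f_i = 0` or `deg f_i < deg q`), for `q` monic. -/
noncomputable def qCoeff {K : Type*} [Field K] (q f : Polynomial K) (i : ℕ) :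
    Polynomial K :=
  (f /ₘ q ^ i) %ₘ q

/-- The `q`-truncation `ν_q(f) = min_i ν(f_i q^i)` of `ν`, the minimum taken
over the nonzero coefficients of the `q`-standard expansion of `f`. -/
noncomputable def truncVal {K : Type*} [Field K] {Γ : Type*}
    [Field Γ] [LinearOrder Γ] [IsStrictOrderedRing Γ] (ν : Polynomial K → Γ) (q f : Polynomial K) : Γ :=
  if h : ((Finset.range (f.natDegree + 1)).filter
      fun i => qCoeff q f i ≠ 0).Nonempty then
    ((Finset.range (f.natDegree + 1)).filter
      fun i => qCoeff q f i ≠ 0).inf' h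
      fun i => ν (qCoeff q f i * q ^ i)
  else 0

/-- `I(Q) = {b : (ν(Q) - ν(∂_b Q))/b = ε(Q)}`. -/
def Iset {K : Type*} [Field K] {Γ : Type*} [Field Γ] [LinearOrder Γ] [IsStrictOrderedRing Γ]
    (ν : Polynomial K → Γ) (Q : Polynomial K) : Set ℕ :=
  {b | 1 ≤ b ∧ Polynomial.hasseDeriv b Q ≠ 0 ∧
    (ν Q - ν (Polynomial.hasseDeriv b Q)) / (b : Γ) = eps ν Q}

/-- `S_Q(f) = {i : ν(f_i Q^i) = ν_Q(f)}` (over nonzero coefficients). -/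
def Sset {K : Type*} [Field K] {Γ : Type*} [Field Γ] [LinearOrder Γ] [IsStrictOrderedRing Γ]
    (ν : Polynomial K → Γ) (q f : Polynomial K) : Set ℕ :=
  {i | qCoeff q f i ≠ 0 ∧ ν (qCoeff q f i * q ^ i) = truncVal ν q f}


variable {K : Type*} [Field K] {Γ : Type*} [Field Γ] [LinearOrder Γ] [IsStrictOrderedRing Γ]


lemma IsVal.one {ν : Polynomial K → Γ} (hν : IsVal ν) : ν 1 = 0 := by
  have := hν.map_mul 1 1 one_ne_zero one_ne_zero
  simp at this; linarith

lemma IsVal.pow {ν : Polynomial K → Γ} (hν : IsVal ν) {Q : Polynomial K}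
    (hQ : Q ≠ 0) (i : ℕ) : ν (Q ^ i) = (i : Γ) * ν Q := by
  induction i with
  | zero => simpa using hν.one
  | succ n ih =>
      rw [pow_succ, hν.map_mul _ _ (pow_ne_zero _ hQ) hQ, ih]
      push_cast; ring

lemma IsVal.sum_lb {ν : Polynomial K → Γ} (hν : IsVal ν) {ι : Type*}
    {s : Finset ι} {g : ι → Polynomial K} {c : Γ}
    (hb : ∀ i ∈ s, g i ≠ 0 → c ≤ ν (g i)) (h0 : (∑ i ∈ s, g i) ≠ 0) :
    c ≤ ν (∑ i ∈ s, g i) := by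
  classical
  induction s using Finset.cons_induction with
  | empty => simp at h0
  | cons a t ha ih =>
      rw [Finset.sum_cons] at h0 ⊢
      by_cases hga : g a = 0
      · rw [hga, zero_add] at h0 ⊢
        exact ih (fun i hi => hb i (Finset.mem_cons_of_mem hi)) h0
      by_cases ht : (∑ i ∈ t, g i) = 0
      · rw [ht, add_zero] at h0 ⊢
        exact hb a (Finset.mem_cons_self a t) h0
      · refine le_trans (le_min (hb a (Finset.mem_cons_self a t) hga)
          (ih (fun i hi => hb i (Finset.mem_cons_of_mem hi)) ht)) ?_
        exact hν.map_add _ _ hga ht h0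

lemma eps_le_bound (ν : Polynomial K → Γ) (f : Polynomial K) {b : ℕ}
    (hb : 1 ≤ b) (hd : Polynomial.hasseDeriv b f ≠ 0) :
    ν f - (b : Γ) * eps ν f ≤ ν (Polynomial.hasseDeriv b f) := by
  have hble : b ≤ f.natDegree := by
    by_contra h
    exact hd (Polynomial.hasseDeriv_eq_zero_of_lt_natDegree f b (lt_of_not_ge h))
  have hmem : b ∈ (Finset.Icc 1 f.natDegree).filter
      (fun b => Polynomial.hasseDeriv b f ≠ 0) := by
    simp only [Finset.mem_filter, Finset.mem_Icc]
    exact ⟨⟨hb, hble⟩, hd⟩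
  have hne : ((Finset.Icc 1 f.natDegree).filter
      (fun b => Polynomial.hasseDeriv b f ≠ 0)).Nonempty := ⟨b, hmem⟩
  have hle := Finset.le_sup' (fun b => (ν f - ν (Polynomial.hasseDeriv b f)) / (b : Γ)) hmem
  rw [eps, dif_pos hne]
  have hb0 : (0 : Γ) < b := by exact_mod_cast hb
  rw [div_le_iff₀ hb0] at hle
  set S := ((Finset.Icc 1 f.natDegree).filter
      (fun b => Polynomial.hasseDeriv b f ≠ 0)).sup' hne
      (fun b => (ν f - ν (Polynomial.hasseDeriv b f)) / (b : Γ))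
  nlinarith [hle]

lemma hd_small {ν : Polynomial K → Γ} {Q : Polynomial K} (hQ : IsKeyPol ν Q)
    {g : Polynomial K} {j : ℕ} (hdeg : g.natDegree < Q.natDegree)
    (hd : Polynomial.hasseDeriv j g ≠ 0) :
    ν g - (j : Γ) * eps ν Q ≤ ν (Polynomial.hasseDeriv j g) := by
  rcases Nat.eq_zero_or_pos j with hj | hj
  · subst hj; simp [Polynomial.hasseDeriv_zero']
  · have hble : j ≤ g.natDegree := by
      by_contra h
      exact hd (Polynomial.hasseDeriv_eq_zero_of_lt_natDegree g j (lt_of_not_ge h))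
    have hg1 : 1 ≤ g.natDegree := le_trans hj hble
    have heg : eps ν g ≤ eps ν Q := by
      by_contra h
      push_neg at h
      exact absurd (hQ.2.2 g hg1 h.le) (not_le.mpr hdeg)
    have h1 := eps_le_bound ν g hj hd
    have h2 : (j : Γ) * eps ν g ≤ (j : Γ) * eps ν Q :=
      mul_le_mul_of_nonneg_left heg (by positivity)
    linarith

lemma hd_self {ν : Polynomial K → Γ} {Q : Polynomial K} {k : ℕ}
    (hd : Polynomial.hasseDeriv k Q ≠ 0) :
    ν Q - (k : Γ) * eps ν Q ≤ ν (Polynomial.hasseDeriv k Q) := by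
  rcases Nat.eq_zero_or_pos k with hk | hk
  · subst hk; simp [Polynomial.hasseDeriv_zero']
  · exact eps_le_bound ν Q hk hd

lemma hd_pow {ν : Polynomial K → Γ} (hν : IsVal ν) {Q : Polynomial K}
    (hQ0 : Q ≠ 0) (i : ℕ) : ∀ k : ℕ, Polynomial.hasseDeriv k (Q ^ i) ≠ 0 →
    (i : Γ) * ν Q - (k : Γ) * eps ν Q ≤ ν (Polynomial.hasseDeriv k (Q ^ i)) := by
  induction i with
  | zero =>
      intro k hd
      rcases Nat.eq_zero_or_pos k with hk | hk
      · subst hk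
        simp [Polynomial.hasseDeriv_zero', hν.one]
      · exact absurd (Polynomial.hasseDeriv_eq_zero_of_lt_natDegree _ k
          (by simpa using hk)) hd
  | succ i ih =>
      intro k hd
      rw [pow_succ'] at hd ⊢
      rw [Polynomial.hasseDeriv_mul] at hd ⊢
      refine hν.sum_lb (fun jl hjl hne => ?_) hd
      have hsum : jl.1 + jl.2 = k := Finset.HasAntidiagonal.mem_antidiagonal.mp hjl
      have h1 : Polynomial.hasseDeriv jl.1 Q ≠ 0 := left_ne_zero_of_mul hne
      have h2 : Polynomial.hasseDeriv jl.2 (Q ^ i) ≠ 0 := right_ne_zero_of_mul hne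
      rw [hν.map_mul _ _ h1 h2]
      have b1 := hd_self (ν := ν) h1
      have b2 := ih jl.2 h2
      have hcast : (jl.1 : Γ) + (jl.2 : Γ) = (k : Γ) := by exact_mod_cast hsum
      have : (jl.1 : Γ) * eps ν Q + (jl.2 : Γ) * eps ν Q = (k : Γ) * eps ν Q := by
        rw [← add_mul, hcast]
      push_cast
      linarith

lemma divByMonic_pow_succ {q : Polynomial K} (hq : q.Monic) (f : Polynomial K)
    (N : ℕ) : f /ₘ q ^ (N + 1) = (f /ₘ q ^ N) /ₘ q := by
  have h1 := Polynomial.modByMonic_add_div (f /ₘ q ^ N) q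
  have h2 := Polynomial.modByMonic_add_div f (q ^ N)
  refine ((Polynomial.div_modByMonic_unique (f := f) (g := q ^ (N + 1))
      ((f /ₘ q ^ N) /ₘ q)
      (f %ₘ q ^ N + q ^ N * ((f /ₘ q ^ N) %ₘ q)) (hq.pow (N + 1)) ⟨?_, ?_⟩)).1
  · rw [pow_succ]
    linear_combination h2 + (q ^ N) * h1
  · have hqN : (q : Polynomial K) ^ N ≠ 0 := pow_ne_zero _ hq.ne_zero
    have hdqN : (q ^ N).degree ≠ ⊥ := fun h => hqN (Polynomial.degree_eq_bot.mp h)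
    have hkey : (q ^ N).degree + q.degree = (q ^ (N + 1)).degree := by
      rw [pow_succ, Polynomial.degree_mul]
    refine lt_of_le_of_lt (Polynomial.degree_add_le _ _) (max_lt ?_ ?_)
    · refine lt_of_lt_of_le (Polynomial.degree_modByMonic_lt f (hq.pow N)) ?_
      rw [← hkey]
      exact le_add_of_nonneg_right (Polynomial.zero_le_degree_iff.mpr hq.ne_zero)
    · by_cases hm : (f /ₘ q ^ N) %ₘ q = 0
      · rw [hm, mul_zero, Polynomial.degree_zero]
        exact Ne.bot_lt fun h => (pow_ne_zero (N + 1) hq.ne_zero)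
          (Polynomial.degree_eq_bot.mp h.symm.symm)
      · rw [Polynomial.degree_mul, ← hkey]
        exact WithBot.add_lt_add_left hdqN
          (Polynomial.degree_modByMonic_lt _ hq)

lemma expansion_aux {q : Polynomial K} (hq : q.Monic) (f : Polynomial K) :
    ∀ N : ℕ, f = (∑ i ∈ Finset.range N, qCoeff q f i * q ^ i)
      + q ^ N * (f /ₘ q ^ N) := by
  intro N
  induction N with
  | zero => simp
  | succ N ih =>
      rw [Finset.sum_range_succ, divByMonic_pow_succ hq]
      have h1 := Polynomial.modByMonic_add_div (f /ₘ q ^ N) q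
      have hc : qCoeff q f N = (f /ₘ q ^ N) %ₘ q := rfl
      rw [hc, pow_succ]
      linear_combination ih - (q ^ N) * h1

lemma expansion {q : Polynomial K} (hq : q.Monic) (hdq : 1 ≤ q.natDegree)
    (f : Polynomial K) :
    f = ∑ i ∈ Finset.range (f.natDegree + 1), qCoeff q f i * q ^ i := by
  have h := expansion_aux hq f (f.natDegree + 1)
  have hz : f /ₘ q ^ (f.natDegree + 1) = 0 := by
    rw [Polynomial.divByMonic_eq_zero_iff (hq.pow _)]
    have hqN : (q : Polynomial K) ^ (f.natDegree + 1) ≠ 0 := pow_ne_zero _ hq.ne_zero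
    rw [Polynomial.degree_eq_natDegree hqN, Polynomial.natDegree_pow]
    refine lt_of_le_of_lt Polynomial.degree_le_natDegree ?_
    exact_mod_cast Nat.lt_of_lt_of_le (Nat.lt_succ_self _)
      (Nat.le_mul_of_pos_right _ hdq)
  rw [hz, mul_zero, add_zero] at h
  exact h

/-- If `Q, Q'` are key polynomials with `ε(Q) < ε(Q')`, then `ν_Q(Q') < ν(Q')`. -/
theorem trunc_lt_of_eps_lt (ν : Polynomial K → Γ) (hν : IsVal ν)
    (Q Q' : Polynomial K) (hQ : IsKeyPol ν Q) (hQ' : IsKeyPol ν Q')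
    (heps : eps ν Q < eps ν Q') :
    truncVal ν Q Q' < ν Q' := by
  have hQ0 : Q ≠ 0 := hQ.1.ne_zero
  have hQ'0 : Q' ≠ 0 := hQ'.1.ne_zero
  have htop : Polynomial.hasseDeriv Q'.natDegree Q' ≠ 0 := by
    intro h
    have hc : (Polynomial.hasseDeriv Q'.natDegree Q').coeff 0 = 1 := by
      rw [Polynomial.hasseDeriv_coeff]
      simp [hQ'.1.coeff_natDegree]
    rw [h] at hc
    simp at hc
  have hne' : ((Finset.Icc 1 Q'.natDegree).filter
      fun b => Polynomial.hasseDeriv b Q' ≠ 0).Nonempty :=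
    ⟨Q'.natDegree, by simp [Finset.mem_Icc, hQ'.2.1, htop]⟩
  obtain ⟨b, hbmem, hbeq⟩ := Finset.exists_mem_eq_sup' hne'
      (fun b => (ν Q' - ν (Polynomial.hasseDeriv b Q')) / (b : Γ))
  simp only [Finset.mem_filter, Finset.mem_Icc] at hbmem
  obtain ⟨⟨hb1, hbn⟩, hbd⟩ := hbmem
  have hepsQ' : eps ν Q' = (ν Q' - ν (Polynomial.hasseDeriv b Q')) / (b : Γ) := by
    rw [eps, dif_pos hne']
    exact hbeq
  by_contra hcon
  push_neg at hcon
  have hexp := expansion hQ.1 hQ.2.1 Q'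
  have htne : ((Finset.range (Q'.natDegree + 1)).filter
      fun i => qCoeff Q Q' i ≠ 0).Nonempty := by
    by_contra h
    rw [Finset.not_nonempty_iff_eq_empty, Finset.filter_eq_empty_iff] at h
    apply hQ'0
    rw [hexp]
    refine Finset.sum_eq_zero fun i hi => ?_
    have hz := h hi
    rw [not_not] at hz
    rw [hz, zero_mul]
  have hterm : ∀ i ∈ Finset.range (Q'.natDegree + 1), qCoeff Q Q' i ≠ 0 →
      ν Q' ≤ ν (qCoeff Q Q' i * Q ^ i) := by
    intro i hi hne0
    refine le_trans hcon ?_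
    rw [truncVal, dif_pos htne]
    exact Finset.inf'_le _ (Finset.mem_filter.mpr ⟨hi, hne0⟩)
  have hsum : Polynomial.hasseDeriv b Q' =
      ∑ i ∈ Finset.range (Q'.natDegree + 1),
        Polynomial.hasseDeriv b (qCoeff Q Q' i * Q ^ i) := by
    conv_lhs => rw [hexp]
    exact map_sum _ _ _
  have hmain : ν Q' - (b : Γ) * eps ν Q ≤ ν (Polynomial.hasseDeriv b Q') := by
    rw [hsum]
    refine hν.sum_lb (fun i hi hne0 => ?_) (by rw [← hsum]; exact hbd)
    rw [Polynomial.hasseDeriv_mul] at hne0 ⊢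
    refine hν.sum_lb (fun jl hjl hne1 => ?_) hne0
    have hsumjl : jl.1 + jl.2 = b := Finset.HasAntidiagonal.mem_antidiagonal.mp hjl
    have h1 : Polynomial.hasseDeriv jl.1 (qCoeff Q Q' i) ≠ 0 := left_ne_zero_of_mul hne1
    have h2 : Polynomial.hasseDeriv jl.2 (Q ^ i) ≠ 0 := right_ne_zero_of_mul hne1
    have hc0 : qCoeff Q Q' i ≠ 0 := by
      intro h
      apply h1
      rw [h]
      simp
    have hcdeg : (qCoeff Q Q' i).natDegree < Q.natDegree :=
      Polynomial.natDegree_lt_natDegree hc0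
        (Polynomial.degree_modByMonic_lt (Q' /ₘ Q ^ i) hQ.1)
    rw [hν.map_mul _ _ h1 h2]
    have b1 := hd_small hQ hcdeg h1
    have b2 := hd_pow hν hQ0 i jl.2 h2
    have hti := hterm i hi hc0
    rw [hν.map_mul _ _ hc0 (pow_ne_zero _ hQ0), hν.pow hQ0] at hti
    have hcast : (jl.1 : Γ) + (jl.2 : Γ) = (b : Γ) := by exact_mod_cast hsumjl
    have he : (jl.1 : Γ) * eps ν Q + (jl.2 : Γ) * eps ν Q = (b : Γ) * eps ν Q := by
      rw [← add_mul, hcast]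
    linarith
  have hb0 : (0 : Γ) < (b : Γ) := by exact_mod_cast hb1
  rw [hepsQ'] at heps
  have hfin : (ν Q' - ν (Polynomial.hasseDeriv b Q')) / (b : Γ) ≤ eps ν Q := by
    rw [div_le_iff₀ hb0]
    nlinarith [hmain]
  linarith
end
end

section
/- Let ν be a valuation on K[x] and {a_ρ}_{ρ<λ} ⊂ K a pseudo-convergent sequence of transcendental type, without a limit in K, for which x is a limit. Then {x - a_ρ : ρ < λ} is a complete set of key polynomials for ν: each x - a_ρ is a key polynomial, and for every f ∈ K[x] there exists ρ < λ with ν_{x-a_ρ}(f) = ν(f). -/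
open Polynomial
open scoped Classical
noncomputable section

section Aux

variable {K : Type*} [Field K] {Γ : Type*} [Field Γ] [LinearOrder Γ] [IsStrictOrderedRing Γ]
  {ν : Polynomial K → Γ}

lemma degree_X_sub_C_pow (c : K) (n : ℕ) : ((X - C c) ^ n).degree = (n : WithBot ℕ) := by
  rw [Polynomial.degree_pow, degree_X_sub_C]
  simp [nsmul_eq_mul]

lemma qCoeff_X_sub_C (c : K) (f : Polynomial K) (i : ℕ) :
    qCoeff (X - C c) f i = C ((taylor c f).coeff i) := by
  induction i generalizing f with
  | zero =>
    simp [qCoeff, divByMonic_one, modByMonic_X_sub_C_eq_C_eval, taylor_coeff_zero]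
  | succ i ih =>
    have hm : (X - C c).Monic := monic_X_sub_C c
    set q : Polynomial K := X - C c with hq
    have hfg : f = q * (f /ₘ q) + C (f.eval c) := by
      conv_lhs => rw [← modByMonic_add_div f q]
      rw [modByMonic_X_sub_C_eq_C_eval]; ring
    have hmi : (q ^ i).Monic := hm.pow i
    have hgd : f /ₘ q = q ^ i * ((f /ₘ q) /ₘ q ^ i) + (f /ₘ q) %ₘ q ^ i := by
      conv_lhs => rw [← modByMonic_add_div (f /ₘ q) (q ^ i)]
      ring
    have hdiv : f /ₘ q ^ (i + 1) = (f /ₘ q) /ₘ q ^ i := by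
      have heq : (q * ((f /ₘ q) %ₘ q ^ i) + C (f.eval c)) +
          q ^ (i+1) * ((f /ₘ q) /ₘ q ^ i) = f := by
        calc q * ((f /ₘ q) %ₘ q ^ i) + C (f.eval c) + q ^ (i+1) * ((f /ₘ q) /ₘ q ^ i)
            = q * (q ^ i * ((f /ₘ q) /ₘ q ^ i) + (f /ₘ q) %ₘ q ^ i) + C (f.eval c) := by ring
          _ = q * (f /ₘ q) + C (f.eval c) := by rw [← hgd]
          _ = f := hfg.symm
      have hdeg : (q * ((f /ₘ q) %ₘ q ^ i) + C (f.eval c)).degree < (q ^ (i+1)).degree := by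
        have hdqi : (q ^ (i+1)).degree = ((i+1 : ℕ) : WithBot ℕ) := degree_X_sub_C_pow c (i+1)
        have h1 : (q * ((f /ₘ q) %ₘ q ^ i)).degree < ((i+1 : ℕ) : WithBot ℕ) := by
          rcases eq_or_ne ((f /ₘ q) %ₘ q ^ i) 0 with h0 | h0
          · simp [h0]
          · rw [Polynomial.degree_mul, degree_X_sub_C]
            have h2 := degree_modByMonic_lt (f /ₘ q) hmi
            rw [degree_X_sub_C_pow c i] at h2
            calc (1 : WithBot ℕ) + ((f /ₘ q) %ₘ q ^ i).degree < 1 + (i:ℕ) :=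
                  (WithBot.add_lt_add_iff_left (by simp)).mpr h2
              _ = ((i+1 : ℕ) : WithBot ℕ) := by push_cast; ring
        have h2 : (C (f.eval c)).degree < ((i+1 : ℕ) : WithBot ℕ) :=
          lt_of_le_of_lt (degree_C_le) (by exact_mod_cast WithBot.coe_lt_coe.mpr (Nat.succ_pos i))
        rw [hdqi]
        exact lt_of_le_of_lt (degree_add_le _ _) (max_lt h1 h2)
      exact (div_modByMonic_unique ((f /ₘ q) /ₘ q ^ i) _ (hm.pow (i+1)) ⟨heq, hdeg⟩).1
    have htay : (taylor c (f /ₘ q)).coeff i = (taylor c f).coeff (i + 1) := by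
      have h3 : taylor c f = X * taylor c (f /ₘ q) + C (f.eval c) := by
        conv_lhs => rw [hfg]
        rw [map_add, taylor_mul]
        simp [taylor_X, taylor_C, hq]
      rw [h3, coeff_add, coeff_X_mul, coeff_C]
      simp
    rw [qCoeff, hdiv, ← htay, ← ih (f /ₘ q)]
    rfl

lemma IsVal.nu_one (hν : IsVal ν) : ν 1 = 0 := by
  have := hν.map_mul 1 1 one_ne_zero one_ne_zero
  simp at this; linarith

lemma IsVal.nu_neg (hν : IsVal ν) {f : Polynomial K} (hf : f ≠ 0) : ν (-f) = ν f := by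
  have h1 : ν ((-1 : Polynomial K) * -1) = ν (-1) + ν (-1) := by
    exact hν.map_mul _ _ (by norm_num) (by norm_num)
  simp only [neg_mul, one_mul, neg_neg] at h1
  rw [hν.nu_one] at h1
  have h2 : ν (-1 : Polynomial K) = 0 := by linarith
  have := hν.map_mul (-1) f (by norm_num) hf
  rw [h2] at this; simpa using this

lemma IsVal.nu_add_of_ne (hν : IsVal ν) {f g : Polynomial K} (hf : f ≠ 0) (hg : g ≠ 0)
    (h : ν f ≠ ν g) : f + g ≠ 0 ∧ ν (f + g) = min (ν f) (ν g) := by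
  have hfg : f + g ≠ 0 := by
    intro h0
    have : f = -g := by linear_combination h0
    rw [this, hν.nu_neg hg] at h
    exact h rfl
  refine ⟨hfg, le_antisymm ?_ (hν.map_add f g hf hg hfg)⟩
  rcases lt_or_gt_of_ne h with hlt | hlt
  · rw [min_eq_left hlt.le]
    by_contra hc
    push_neg at hc
    have h4 := hν.map_add (f + g) (-g) hfg (neg_ne_zero.mpr hg) (by simpa using hf)
    simp only [add_neg_cancel_right] at h4
    rw [hν.nu_neg hg] at h4
    have : min (ν (f + g)) (ν g) > ν f := lt_min hc hlt
    linarith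
  · rw [min_eq_right hlt.le]
    by_contra hc
    push_neg at hc
    have h4 := hν.map_add (f + g) (-f) hfg (neg_ne_zero.mpr hf) (by simpa [add_comm] using hg)
    have h5 : f + g + -f = g := by ring
    rw [h5, hν.nu_neg hf] at h4
    have : min (ν (f + g)) (ν f) > ν g := lt_min hc hlt
    linarith

lemma IsVal.nu_pow (hν : IsVal ν) {q : Polynomial K} (hq : q ≠ 0) (i : ℕ) :
    ν (q ^ i) = (i : Γ) * ν q := by
  induction i with
  | zero => simpa using hν.nu_one
  | succ i ih =>
    rw [pow_succ, hν.map_mul _ _ (pow_ne_zero i hq) hq, ih]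
    push_cast; ring

lemma IsVal.nu_sum_distinct (hν : IsVal ν) {ι : Type*} (s : Finset ι) (hs : s.Nonempty)
    (t : ι → Polynomial K) (h0 : ∀ i ∈ s, t i ≠ 0)
    (hd : ∀ i ∈ s, ∀ j ∈ s, i ≠ j → ν (t i) ≠ ν (t j)) :
    (∑ i ∈ s, t i) ≠ 0 ∧ ν (∑ i ∈ s, t i) = s.inf' hs fun i => ν (t i) := by
  classical
  induction s using Finset.cons_induction with
  | empty => exact absurd hs (by simp)
  | cons a s ha ih =>
    rcases s.eq_empty_or_nonempty with rfl | hne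
    · simp [h0 a (by simp)]
    · have h0' : ∀ i ∈ s, t i ≠ 0 := fun i hi => h0 i (Finset.mem_cons_of_mem hi)
      have hd' : ∀ i ∈ s, ∀ j ∈ s, i ≠ j → ν (t i) ≠ ν (t j) := fun i hi j hj =>
        hd i (Finset.mem_cons_of_mem hi) j (Finset.mem_cons_of_mem hj)
      obtain ⟨hsne, hsv⟩ := ih hne h0' hd'
      obtain ⟨j, hj, hjv⟩ := Finset.exists_mem_eq_inf' hne fun i => ν (t i)
      have hane : ν (t a) ≠ ν (∑ i ∈ s, t i) := by
        rw [hsv, hjv]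
        exact hd a (Finset.mem_cons_self a s) j (Finset.mem_cons_of_mem hj)
          (fun h => ha (h ▸ hj))
      have key := hν.nu_add_of_ne (h0 a (Finset.mem_cons_self a s)) hsne hane
      rw [Finset.sum_cons, Finset.inf'_cons]
      refine ⟨key.1, ?_⟩
      rw [key.2, hsv]

end Aux

variable {K : Type*} [Field K] {Γ : Type*} [Field Γ] [LinearOrder Γ] [IsStrictOrderedRing Γ]
variable {Λ : Type*} [LinearOrder Λ] [Nonempty Λ] [NoMaxOrder Λ]
  [WellFoundedLT Λ]

/-- `{a_ρ}` is a pseudo-convergent sequence for `ν`. -/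
def IsPCS (ν : Polynomial K → Γ) (a : Λ → K) : Prop :=
  ∀ ρ σ τ : Λ, ρ < σ → σ < τ →
    ν (C (a σ) - C (a ρ)) < ν (C (a τ) - C (a σ))

/-- `x` is a limit of the pseudo-convergent sequence `{a_ρ}`:
`ν(x - a_ρ) = γ_ρ = ν(a_σ - a_ρ)` for all `σ > ρ`. -/
def XIsLimit (ν : Polynomial K → Γ) (a : Λ → K) : Prop :=
  ∀ ρ σ : Λ, ρ < σ → ν (X - C (a ρ)) = ν (C (a σ) - C (a ρ))

/-- `{a_ρ}` fixes the value of `f`: `ν(f(a_σ))` is eventually constant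
(and in particular `f(a_σ)` is eventually nonzero). -/
def FixesVal (ν : Polynomial K → Γ) (a : Λ → K) (f : Polynomial K) : Prop :=
  ∃ ρ₀ : Λ, ∀ σ : Λ, ρ₀ ≤ σ → f.eval (a σ) ≠ 0 ∧
    ν (C (f.eval (a σ))) = ν (C (f.eval (a ρ₀)))

/-- `{a_ρ}` has a limit in `K`. -/
def HasLimitInK (ν : Polynomial K → Γ) (a : Λ → K) : Prop :=
  ∃ c : K, ∀ ρ σ : Λ, ρ < σ → ν (C c - C (a ρ)) = ν (C (a σ) - C (a ρ))

/-- If `{a_ρ}` is a pseudo-convergent sequence of transcendental type,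
without a limit in `K`, for which `x` is a limit, then
`{x - a_ρ}` is a complete set of key polynomials for `ν`. -/
theorem transcendental_complete_set (ν : Polynomial K → Γ) (hν : IsVal ν)
    (a : Λ → K) (hpcs : IsPCS ν a) (hlim : XIsLimit ν a)
    (hnolim : ¬ HasLimitInK ν a)
    (htrans : ∀ f : Polynomial K, f ≠ 0 → FixesVal ν a f) :
    (∀ ρ : Λ, IsKeyPol ν (X - C (a ρ))) ∧
    (∀ f : Polynomial K, f ≠ 0 →
      ∃ ρ : Λ, truncVal ν (X - C (a ρ)) f = ν f) := by
  classical
  refine ⟨fun ρ => ⟨monic_X_sub_C _, by simp, fun g hg _ => by simpa using hg⟩, ?_⟩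
  intro f hf
  -- γ is strictly monotone, hence injective
  have hγmono : ∀ ρ σ : Λ, ρ < σ → ν (X - C (a ρ)) < ν (X - C (a σ)) := by
    intro ρ σ h
    obtain ⟨τ, hτ⟩ := exists_gt σ
    rw [hlim ρ σ h, hlim σ τ hτ]
    exact hpcs ρ σ τ h hτ
  have hγinj : ∀ ρ σ : Λ, ν (X - C (a ρ)) = ν (X - C (a σ)) → ρ = σ := by
    intro ρ σ h
    rcases lt_trichotomy ρ σ with h1 | h1 | h1
    · exact absurd h (ne_of_lt (hγmono _ _ h1))
    · exact h1
    · exact absurd h.symm (ne_of_lt (hγmono _ _ h1))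
  set n := f.natDegree with hn
  set T : Finset ℕ := (Finset.range (n+1)).filter (fun i => hasseDeriv i f ≠ 0) with hT
  have hT0 : (0:ℕ) ∈ T := by
    simp [hT, Finset.mem_filter, hf]
  have hTne : T.Nonempty := ⟨0, hT0⟩
  have hTmem : ∀ i ∈ T, hasseDeriv i f ≠ 0 := by
    intro i hi
    exact (Finset.mem_filter.mp hi).2
  -- choose the stabilization indices
  have hch : ∀ i : ℕ, hasseDeriv i f ≠ 0 → ∃ ρ₀ : Λ, ∀ σ : Λ, ρ₀ ≤ σ →
      (hasseDeriv i f).eval (a σ) ≠ 0 ∧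
      ν (C ((hasseDeriv i f).eval (a σ))) = ν (C ((hasseDeriv i f).eval (a ρ₀))) :=
    fun i h => htrans _ h
  choose! r hr using hch
  set β : ℕ → Γ := fun i => ν (C ((hasseDeriv i f).eval (a (r i)))) with hβ
  -- the "bad" crossing points
  set bad : ℕ → ℕ → Λ := fun i j =>
    if h : ∃ σ : Λ, ν (X - C (a σ)) = (β j - β i) / ((i:Γ) - (j:Γ)) then h.choose
    else Classical.arbitrary Λ with hbad
  set s : Finset Λ := T.image r ∪ (T ×ˢ T).image (fun p => bad p.1 p.2) with hs
  obtain ⟨σ, hσ⟩ : ∃ σ : Λ, ∀ x ∈ s, x < σ := by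
    rcases s.eq_empty_or_nonempty with h | h
    · exact ⟨Classical.arbitrary Λ, by simp [h]⟩
    · obtain ⟨σ, hσ⟩ := exists_gt (s.max' h)
      exact ⟨σ, fun x hx => lt_of_le_of_lt (Finset.le_max' s x hx) hσ⟩
  have hrσ : ∀ i ∈ T, r i ≤ σ := fun i hi =>
    le_of_lt (hσ _ (Finset.mem_union_left _ (Finset.mem_image_of_mem r hi)))
  have hb : ∀ i ∈ T, (hasseDeriv i f).eval (a σ) ≠ 0 ∧
      ν (C ((hasseDeriv i f).eval (a σ))) = β i :=
    fun i hi => hr i (hTmem i hi) σ (hrσ i hi)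
  set q : Polynomial K := X - C (a σ) with hq
  have hq0 : q ≠ 0 := (monic_X_sub_C (a σ)).ne_zero
  have hcoeff : ∀ i, (taylor (a σ) f).coeff i = (hasseDeriv i f).eval (a σ) :=
    fun i => taylor_coeff (a σ) f i
  set t : ℕ → Polynomial K := fun i => C ((taylor (a σ) f).coeff i) * q ^ i with hti
  have ht0 : ∀ i ∈ T, t i ≠ 0 := by
    intro i hi
    exact mul_ne_zero (by rw [C_ne_zero, hcoeff]; exact (hb i hi).1) (pow_ne_zero _ hq0)
  have htv : ∀ i ∈ T, ν (t i) = β i + (i:Γ) * ν q := by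
    intro i hi
    rw [hti]
    rw [hν.map_mul _ _ (by rw [C_ne_zero, hcoeff]; exact (hb i hi).1) (pow_ne_zero _ hq0),
      hν.nu_pow hq0, hcoeff, (hb i hi).2]
  have hdist : ∀ i ∈ T, ∀ j ∈ T, i ≠ j → ν (t i) ≠ ν (t j) := by
    intro i hi j hj hij heqv
    rw [htv i hi, htv j hj] at heqv
    have hijΓ : (i:Γ) ≠ (j:Γ) := fun h => hij (Nat.cast_injective h)
    have hsub : (i:Γ) - (j:Γ) ≠ 0 := sub_ne_zero.mpr hijΓ
    have hγeq : ν (X - C (a σ)) = (β j - β i) / ((i:Γ) - (j:Γ)) :=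
      (eq_div_iff hsub).mpr (by rw [← hq]; linarith)
    have hex : ∃ τ : Λ, ν (X - C (a τ)) = (β j - β i) / ((i:Γ) - (j:Γ)) := ⟨σ, hγeq⟩
    have hbadv : ν (X - C (a (bad i j))) = (β j - β i) / ((i:Γ) - (j:Γ)) := by
      rw [hbad]
      simp only [dif_pos hex]
      exact hex.choose_spec
    have hσbad : σ = bad i j := hγinj _ _ (hγeq.trans hbadv.symm)
    have hlt := hσ (bad i j) (Finset.mem_union_right _
      (Finset.mem_image.mpr ⟨(i, j), Finset.mem_product.mpr ⟨hi, hj⟩, rfl⟩))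
    rw [← hσbad] at hlt
    exact lt_irrefl σ hlt
  -- T is the support of the Taylor expansion
  have hTsupp : T = (taylor (a σ) f).support := by
    ext i
    simp only [hT, Finset.mem_filter, Finset.mem_range, mem_support_iff, hcoeff,
      Nat.lt_succ_iff]
    constructor
    · rintro ⟨hle, hne⟩
      exact (hb i (by simp [hT, Finset.mem_filter, Nat.lt_succ_iff, hle, hne])).1
    · intro h
      have h1 : hasseDeriv i f ≠ 0 := fun h0 => h (by rw [h0]; simp)
      have h2 : i ≤ n := by
        have := le_natDegree_of_ne_zero (p := taylor (a σ) f) (by rwa [hcoeff])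
        rwa [natDegree_taylor] at this
      exact ⟨h2, h1⟩
  have hsum : ∑ i ∈ T, t i = f := by
    rw [hTsupp]
    have := sum_taylor_eq f (a σ)
    rwa [Polynomial.sum_def] at this
  obtain ⟨hne0, hval⟩ := hν.nu_sum_distinct T hTne t ht0 hdist
  rw [hsum] at hval
  refine ⟨σ, ?_⟩
  have hfilter : ((Finset.range (f.natDegree + 1)).filter fun i => qCoeff q f i ≠ 0) = T := by
    ext i
    simp only [Finset.mem_filter, Finset.mem_range, ← hn, hq, qCoeff_X_sub_C (a σ) f i,
      C_ne_zero]
    rw [hTsupp]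
    simp only [mem_support_iff]
    constructor
    · rintro ⟨_, h⟩; exact h
    · intro h
      refine ⟨?_, h⟩
      have := le_natDegree_of_ne_zero (p := taylor (a σ) f) h
      rw [natDegree_taylor] at this
      omega
  have htrunc : truncVal ν q f = T.inf' hTne fun i => ν (t i) := by
    rw [truncVal, hfilter, dif_pos hTne]
    apply Finset.inf'_congr _ rfl
    intro i _
    rw [hq, qCoeff_X_sub_C (a σ) f i]
  rw [htrunc, ← hval]
end
end
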